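/- Let α be a compactly supported centered Borel probability measure on ℝ^D, β a compactly supported centered Borel probability measure on ℝ^E, and ε > 0. Define D_ε(Γ) = ‖Γ‖_F² + (1/8)·OT_ε^Γ(α,β) for Γ ∈ ℝ^{D×E}. Suppose Γ ∈ ℝ^{D×E}, π' ∈ Π(α,β) attains the infimum defining OT_ε^Γ(α,β), and set Γ' = ∫ x yᵀ dπ'(x,y). Then the alternating-minimization descent inequality holds: D_ε(Γ) − D_ε(Γ') ≥ ‖Γ − Γ'‖_F². -/

import Mathlib

open MeasureTheory Classical

/-- Kullback–Leibler divergence, with value `⊤` when `π` is not absolutely continuous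
with respect to `μ` or the log-likelihood ratio is not integrable. -/
noncomputable def klE {Z : Type*} [MeasurableSpace Z] (π μ : Measure Z) : EReal :=
  if π ≪ μ ∧ Integrable (llr π μ) π then ((∫ z, llr π μ z ∂π : ℝ) : EReal) else ⊤

/-- The set of couplings between `α` and `β`. -/
def couplings {X Y : Type*} [MeasurableSpace X] [MeasurableSpace Y]
    (α : Measure X) (β : Measure Y) : Set (Measure (X × Y)) :=
  {π | π.map Prod.fst = α ∧ π.map Prod.snd = β}

/-- The entropic OT cost `OT_ε^Γ(α,β)` for the cost
`c_Γ(x,y) = -16 ⟨Γ, x yᵀ⟩_F - 4 ‖x‖² ‖y‖²`. -/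
noncomputable def otGammaM {D E : ℕ}
    (α : Measure (EuclideanSpace ℝ (Fin D))) (β : Measure (EuclideanSpace ℝ (Fin E)))
    (ε : ℝ) (Γ : Matrix (Fin D) (Fin E) ℝ) : EReal :=
  ⨅ π ∈ couplings α β,
    ((∫ p, (-16 * ∑ i, ∑ j, Γ i j * (p.1 i * p.2 j)
        - 4 * ‖p.1‖ ^ 2 * ‖p.2‖ ^ 2) ∂π : ℝ) : EReal)
      + (ε : EReal) * klE π (α.prod β)

/-- The dual function `D_ε(Γ) = ‖Γ‖_F² + (1/8) OT_ε^Γ(α,β)`. -/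
noncomputable def dualFun {D E : ℕ}
    (α : Measure (EuclideanSpace ℝ (Fin D))) (β : Measure (EuclideanSpace ℝ (Fin E)))
    (ε : ℝ) (Γ : Matrix (Fin D) (Fin E) ℝ) : ℝ :=
  (∑ i, ∑ j, (Γ i j) ^ 2) + (1 / 8) * (otGammaM α β ε Γ).toReal

section Aux

open scoped ENNReal

/-- `klE` never takes the value `⊥`. -/
lemma klE_ne_bot' {Z : Type*} [MeasurableSpace Z] (π μ : Measure Z) : klE π μ ≠ ⊥ := by
  unfold klE
  split
  · exact EReal.coe_ne_bot _
  · simp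

/-- Nonnegativity of the integral of the log-likelihood ratio (KL divergence). -/
lemma integral_llr_nonneg' {Z : Type*} [MeasurableSpace Z] (π μ : Measure Z)
    [IsProbabilityMeasure π] [IsProbabilityMeasure μ]
    (hac : π ≪ μ) (hint : Integrable (llr π μ) π) :
    0 ≤ ∫ z, llr π μ z ∂π := by
  set f := π.rnDeriv μ with hf
  have hmeas : AEMeasurable (fun z => (f z)⁻¹) π :=
    (Measure.measurable_rnDeriv π μ).inv.aemeasurable
  have hlin : ∫⁻ z, (f z)⁻¹ ∂π ≤ 1 := by
    rw [← lintegral_rnDeriv_mul (f := fun z => (f z)⁻¹) hac (Measure.measurable_rnDeriv π μ).inv.aemeasurable]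
    calc ∫⁻ x, f x * (f x)⁻¹ ∂μ ≤ ∫⁻ _, 1 ∂μ := lintegral_mono fun x => ENNReal.mul_inv_le_one _
    _ = 1 := by simp
  have hint_inv : Integrable (fun z => ((f z)⁻¹).toReal) π :=
    integrable_toReal_of_lintegral_ne_top hmeas (lt_of_le_of_lt hlin ENNReal.one_lt_top).ne
  have hpos : ∀ᵐ z ∂π, 0 < f z := Measure.rnDeriv_pos hac
  have hlt : ∀ᵐ z ∂π, f z < ⊤ := (Measure.rnDeriv_lt_top π μ).filter_mono hac.ae_le
  have hptwise : ∀ᵐ z ∂π, 1 - ((f z)⁻¹).toReal ≤ llr π μ z := by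
    filter_upwards [hpos, hlt] with z h0 ht
    have h0' : 0 < (f z).toReal := ENNReal.toReal_pos h0.ne' ht.ne
    have h2 := Real.log_le_sub_one_of_pos (inv_pos.mpr h0')
    rw [Real.log_inv] at h2
    rw [llr, ENNReal.toReal_inv]
    linarith
  have hmono : ∫ z, (1 - ((f z)⁻¹).toReal) ∂π ≤ ∫ z, llr π μ z ∂π :=
    integral_mono_ae ((integrable_const 1).sub hint_inv) hint hptwise
  have hval : ∫ z, (1 - ((f z)⁻¹).toReal) ∂π = 1 - ∫ z, ((f z)⁻¹).toReal ∂π := by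
    rw [integral_sub (integrable_const 1) hint_inv]; simp
  have hle1 : ∫ z, ((f z)⁻¹).toReal ∂π ≤ 1 := by
    have haelt : ∀ᵐ z ∂π, (f z)⁻¹ < ⊤ := by
      filter_upwards [hpos] with z h0; exact ENNReal.inv_lt_top.mpr h0
    rw [integral_toReal hmeas haelt]
    calc (∫⁻ z, (f z)⁻¹ ∂π).toReal ≤ (1 : ℝ≥0∞).toReal :=
      ENNReal.toReal_mono ENNReal.one_ne_top hlin
    _ = 1 := by simp
  linarith

/-- `klE` is nonnegative for probability measures. -/
lemma klE_nonneg' {Z : Type*} [MeasurableSpace Z] (π μ : Measure Z)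
    [IsProbabilityMeasure π] [IsProbabilityMeasure μ] : 0 ≤ klE π μ := by
  unfold klE
  split_ifs with h
  · exact_mod_cast integral_llr_nonneg' π μ h.1 h.2
  · exact le_top

/-- `klE μ μ = 0`. -/
lemma klE_self' {Z : Type*} [MeasurableSpace Z] (μ : Measure Z) [SigmaFinite μ] :
    klE μ μ = 0 := by
  have h0 : llr μ μ =ᵐ[μ] 0 := by
    filter_upwards [Measure.rnDeriv_self μ] with x hx
    simp [llr, hx]
  unfold klE
  rw [if_pos ⟨Measure.AbsolutelyContinuous.rfl,
      (integrable_congr h0).mpr (integrable_zero _ _ _)⟩, integral_congr_ae h0]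
  simp

/-- Continuity of the cost function. -/
lemma cost_continuous' {D E : ℕ} (A : Matrix (Fin D) (Fin E) ℝ) :
    Continuous (fun p : EuclideanSpace ℝ (Fin D) × EuclideanSpace ℝ (Fin E) =>
      -16 * ∑ i, ∑ j, A i j * (p.1 i * p.2 j) - 4 * ‖p.1‖ ^ 2 * ‖p.2‖ ^ 2) := by
  fun_prop

end Aux

/-- the alternating-minimization descent inequality
`D_ε(Γ) - D_ε(Γ') ≥ ‖Γ - Γ'‖_F²` where `Γ' = ∫ x yᵀ dπ'` and `π'` is an optimal
entropic plan for the cost `c_Γ`. -/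
theorem alternating_minimization_descent {D E : ℕ}
    (α : Measure (EuclideanSpace ℝ (Fin D))) (β : Measure (EuclideanSpace ℝ (Fin E)))
    [IsProbabilityMeasure α] [IsProbabilityMeasure β]
    (KX : Set (EuclideanSpace ℝ (Fin D))) (KY : Set (EuclideanSpace ℝ (Fin E)))
    (hKX : IsCompact KX) (hKY : IsCompact KY) (hαK : α KXᶜ = 0) (hβK : β KYᶜ = 0)
    (hαcentered : ∫ x, x ∂α = 0) (hβcentered : ∫ y, y ∂β = 0)
    (ε : ℝ) (hε : 0 < ε)
    (Γ : Matrix (Fin D) (Fin E) ℝ)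
    (π' : Measure (EuclideanSpace ℝ (Fin D) × EuclideanSpace ℝ (Fin E)))
    (hπ' : π' ∈ couplings α β)
    (hopt : ((∫ p, (-16 * ∑ i, ∑ j, Γ i j * (p.1 i * p.2 j)
          - 4 * ‖p.1‖ ^ 2 * ‖p.2‖ ^ 2) ∂π' : ℝ) : EReal)
        + (ε : EReal) * klE π' (α.prod β) = otGammaM α β ε Γ)
    (Γ' : Matrix (Fin D) (Fin E) ℝ)
    (hΓ' : Γ' = Matrix.of fun i j => ∫ p, p.1 i * p.2 j ∂π') :
    (∑ i, ∑ j, (Γ i j - Γ' i j) ^ 2) ≤ dualFun α β ε Γ - dualFun α β ε Γ' := by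
  -- notation
  set c : Matrix (Fin D) (Fin E) ℝ → (EuclideanSpace ℝ (Fin D) × EuclideanSpace ℝ (Fin E)) → ℝ :=
    fun A p => -16 * ∑ i, ∑ j, A i j * (p.1 i * p.2 j) - 4 * ‖p.1‖ ^ 2 * ‖p.2‖ ^ 2 with hc
  set S : Set (EuclideanSpace ℝ (Fin D) × EuclideanSpace ℝ (Fin E)) := KX ×ˢ KY with hS
  have hScompact : IsCompact S := hKX.prod hKY
  -- couplings are probability measures concentrated on S
  have hprob : ∀ π : Measure (EuclideanSpace ℝ (Fin D) × EuclideanSpace ℝ (Fin E)),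
      π ∈ couplings α β → IsProbabilityMeasure π := by
    intro π hπ
    constructor
    have h1 : π.map Prod.fst Set.univ = 1 := by rw [hπ.1]; exact measure_univ
    rwa [Measure.map_apply measurable_fst MeasurableSet.univ, Set.preimage_univ] at h1
  have hnull : ∀ π : Measure (EuclideanSpace ℝ (Fin D) × EuclideanSpace ℝ (Fin E)),
      π ∈ couplings α β → ∀ᵐ p ∂π, p ∈ S := by
    intro π hπ
    have hsub : Sᶜ ⊆ (Prod.fst ⁻¹' KXᶜ) ∪ (Prod.snd ⁻¹' KYᶜ) := by
      intro p hp
      by_contra h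
      simp only [Set.mem_union, Set.mem_preimage, Set.mem_compl_iff, not_or] at h
      push_neg at h
      exact hp ⟨h.1, h.2⟩
    have h1 : π (Prod.fst ⁻¹' KXᶜ) = 0 := by
      rw [← Measure.map_apply measurable_fst hKX.isClosed.measurableSet.compl, hπ.1]; exact hαK
    have h2 : π (Prod.snd ⁻¹' KYᶜ) = 0 := by
      rw [← Measure.map_apply measurable_snd hKY.isClosed.measurableSet.compl, hπ.2]; exact hβK
    have : π Sᶜ = 0 :=
      le_antisymm ((measure_mono hsub).trans ((measure_union_le _ _).trans (by rw [h1, h2]; simp)))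
        zero_le
    exact (ae_iff.mpr (by simpa [Set.compl_def] using this))
  -- integrability of continuous functions against couplings
  have hIntC : ∀ (π : Measure (EuclideanSpace ℝ (Fin D) × EuclideanSpace ℝ (Fin E))),
      π ∈ couplings α β →
      ∀ f : (EuclideanSpace ℝ (Fin D) × EuclideanSpace ℝ (Fin E)) → ℝ,
      Continuous f → Integrable f π := by
    intro π hπ f hf
    haveI := hprob π hπ
    obtain ⟨C, hC⟩ := hScompact.exists_bound_of_continuousOn hf.continuousOn
    exact (integrable_const C).mono' hf.aestronglyMeasurable
      ((hnull π hπ).mono fun p hp => hC p hp)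
  haveI hπ'prob := hprob π' hπ'
  have hprodmem : α.prod β ∈ couplings α β :=
    ⟨by simp [Measure.map_fst_prod], by simp [Measure.map_snd_prod]⟩
  -- otGammaM as an infimum: upper bounds from particular couplings
  have hub : ∀ (A : Matrix (Fin D) (Fin E) ℝ)
      (π : Measure (EuclideanSpace ℝ (Fin D) × EuclideanSpace ℝ (Fin E))) (hπ : π ∈ couplings α β),
      otGammaM α β ε A ≤ ((∫ p, c A p ∂π : ℝ) : EReal) + (ε : EReal) * klE π (α.prod β) :=
    fun A π hπ => iInf₂_le π hπ
  -- otGammaM Γ is not ⊤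
  have hotΓ_netop : otGammaM α β ε Γ ≠ ⊤ := by
    refine ne_top_of_le_ne_top ?_ (hub Γ (α.prod β) hprodmem)
    rw [klE_self']
    simp only [mul_zero, add_zero]
    exact EReal.coe_ne_top _
  -- klE π' is a real number
  have hklE_netop : klE π' (α.prod β) ≠ ⊤ := by
    intro h
    rw [h, EReal.mul_top_of_pos (by exact_mod_cast hε), EReal.add_top_of_ne_bot
      (EReal.coe_ne_bot _)] at hopt
    exact hotΓ_netop hopt.symm
  set kr : ℝ := (klE π' (α.prod β)).toReal with hkr
  have hkE : klE π' (α.prod β) = (kr : EReal) :=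
    (EReal.coe_toReal hklE_netop (klE_ne_bot' _ _)).symm
  set I₁ : ℝ := ∫ p, c Γ p ∂π' with hI₁
  set I₂ : ℝ := ∫ p, c Γ' p ∂π' with hI₂
  -- value of otGammaM Γ
  have hotΓ : otGammaM α β ε Γ = ((I₁ + ε * kr : ℝ) : EReal) := by
    rw [← hopt, hkE, ← EReal.coe_mul, ← EReal.coe_add]
  -- lower bound for otGammaM Γ'
  obtain ⟨C, hC0⟩ := hScompact.exists_bound_of_continuousOn (cost_continuous' Γ').continuousOn
  have hC : ∀ x ∈ S, ‖c Γ' x‖ ≤ C := hC0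
  set Cb : ℝ := max C 0 with hCb
  have hlowint : ∀ (π : Measure (EuclideanSpace ℝ (Fin D) × EuclideanSpace ℝ (Fin E))),
      π ∈ couplings α β → -Cb ≤ ∫ p, c Γ' p ∂π := by
    intro π hπ
    haveI := hprob π hπ
    by_cases hI : Integrable (c Γ') π
    · have hae : ∀ᵐ p ∂π, -Cb ≤ c Γ' p := by
        filter_upwards [hnull π hπ] with p hp
        have h0 := hC p hp
        rw [Real.norm_eq_abs] at h0
        have h1 := (abs_le.mp h0).1
        have h2 : C ≤ Cb := le_max_left _ _
        linarith
      calc -Cb = ∫ _, (-Cb : ℝ) ∂π := by simp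
      _ ≤ ∫ p, c Γ' p ∂π := integral_mono_ae (integrable_const _) hI hae
    · rw [integral_undef hI]
      have : (0:ℝ) ≤ Cb := le_max_right _ _
      linarith
  have hotΓ'_low : ((-Cb : ℝ) : EReal) ≤ otGammaM α β ε Γ' := by
    refine le_iInf₂ fun π hπ => ?_
    haveI := hprob π hπ
    have h1 : ((-Cb : ℝ) : EReal) ≤ ((∫ p, c Γ' p ∂π : ℝ) : EReal) := by
      exact_mod_cast hlowint π hπ
    have h2 : (0 : EReal) ≤ (ε : EReal) * klE π (α.prod β) :=
      mul_nonneg (by exact_mod_cast hε.le) (klE_nonneg' _ _)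
    calc ((-Cb : ℝ) : EReal) = ((-Cb : ℝ) : EReal) + 0 := by simp
    _ ≤ ((∫ p, c Γ' p ∂π : ℝ) : EReal) + (ε : EReal) * klE π (α.prod β) := add_le_add h1 h2
  have hotΓ'_up : otGammaM α β ε Γ' ≤ ((I₂ + ε * kr : ℝ) : EReal) := by
    have := hub Γ' π' hπ'
    rwa [hkE, ← EReal.coe_mul, ← EReal.coe_add] at this
  -- toReal bounds
  have hdΓ : dualFun α β ε Γ = (∑ i, ∑ j, (Γ i j) ^ 2) + (1 / 8) * (I₁ + ε * kr) := by
    rw [dualFun, hotΓ, EReal.toReal_coe]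
  have hdΓ' : dualFun α β ε Γ' ≤ (∑ i, ∑ j, (Γ' i j) ^ 2) + (1 / 8) * (I₂ + ε * kr) := by
    rw [dualFun]
    have h1 : (otGammaM α β ε Γ').toReal ≤ I₂ + ε * kr := by
      have := EReal.toReal_le_toReal hotΓ'_up
        (ne_bot_of_le_ne_bot (EReal.coe_ne_bot _) hotΓ'_low) (EReal.coe_ne_top _)
      rwa [EReal.toReal_coe] at this
    linarith
  -- the key integral identity
  have hint1 : Integrable (c Γ) π' := hIntC π' hπ' _ (cost_continuous' Γ)
  have hint2 : Integrable (c Γ') π' := hIntC π' hπ' _ (cost_continuous' Γ')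
  have hkey : I₁ - I₂ = -16 * ∑ i, ∑ j, (Γ i j - Γ' i j) * Γ' i j := by
    rw [hI₁, hI₂, ← integral_sub hint1 hint2]
    have hfun : (fun p => c Γ p - c Γ' p)
        = fun p => -16 * ∑ i, ∑ j, (Γ i j - Γ' i j) * (p.1 i * p.2 j) := by
      funext p
      simp only [hc]
      rw [show (-16 * ∑ i, ∑ j, Γ i j * (p.1 i * p.2 j) - 4 * ‖p.1‖ ^ 2 * ‖p.2‖ ^ 2)
          - (-16 * ∑ i, ∑ j, Γ' i j * (p.1 i * p.2 j) - 4 * ‖p.1‖ ^ 2 * ‖p.2‖ ^ 2)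
          = -16 * ((∑ i, ∑ j, Γ i j * (p.1 i * p.2 j)) - ∑ i, ∑ j, Γ' i j * (p.1 i * p.2 j))
          from by ring]
      rw [Finset.mul_sum, ← Finset.sum_sub_distrib, Finset.mul_sum]
      refine Finset.sum_congr rfl fun i _ => ?_
      rw [← Finset.sum_sub_distrib, Finset.mul_sum, Finset.mul_sum]
      refine Finset.sum_congr rfl fun j _ => by ring
    rw [hfun, integral_const_mul]
    congr 1
    have hcont_ij : ∀ (i : Fin D) (j : Fin E),
        Continuous fun p : EuclideanSpace ℝ (Fin D) × EuclideanSpace ℝ (Fin E) =>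
          (Γ i j - Γ' i j) * (p.1 i * p.2 j) := by
      intro i j; fun_prop
    rw [integral_finset_sum _ fun i _ => hIntC π' hπ' _ (by fun_prop)]
    refine Finset.sum_congr rfl fun i _ => ?_
    rw [integral_finset_sum _ fun j _ => hIntC π' hπ' _ (hcont_ij i j)]
    refine Finset.sum_congr rfl fun j _ => ?_
    rw [integral_const_mul]
    congr 1
    rw [hΓ']
    rfl
  -- final algebra
  have hsq : ∑ i, ∑ j, (Γ i j - Γ' i j) ^ 2
      = ∑ i, ∑ j, (Γ i j) ^ 2 - ∑ i, ∑ j, (Γ' i j) ^ 2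
        - 2 * ∑ i, ∑ j, ((Γ i j - Γ' i j) * Γ' i j) := by
    rw [Finset.mul_sum, ← Finset.sum_sub_distrib, ← Finset.sum_sub_distrib]
    refine Finset.sum_congr rfl fun i _ => ?_
    rw [Finset.mul_sum, ← Finset.sum_sub_distrib, ← Finset.sum_sub_distrib]
    exact Finset.sum_congr rfl fun j _ => by ring
  linarith [hdΓ, hdΓ', hkey, hsq]
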